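/- Let D be a positive integer with decimal expansion D = Σ_{i=0}^n a_i·10^i (a_n ≠ 0) such that D > rev(D) and E = D − rev(D) has the same number of decimal digits as D, and let F = E + rev(E). Then F = 99 · Σ_{i=0}^{n−1} b_{n−1−i}·10^i, where (b_i) is the digital borrow sequence of D; that is, the decimal digit string of F/99 is the reverse of the digital borrow sequence b_{n−1} b_{n−2} … b_1 b_0. -/

import Mathlib

/-- Digital reversal of a natural number (in base 10). -/
def rev (D : ℕ) : ℕ := Nat.ofDigits 10 ((Nat.digits 10 D).reverse)

/-- The digital borrow sequence for the subtraction `D - rev D`, where `a` is the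
digit sequence of `D` (little-endian) and `n+1` is the number of digits:
`b i = 1` iff `a i - a (n-i) - b (i-1) < 0`, with `b (-1) = 0`. -/
def borrow (a : ℕ → ℕ) (n : ℕ) : ℕ → ℕ
  | 0 => if (a 0 : ℤ) - (a n : ℤ) < 0 then 1 else 0
  | i + 1 => if (a (i + 1) : ℤ) - (a (n - (i + 1)) : ℤ) - (borrow a n i : ℤ) < 0 then 1 else 0

namespace Stmt2Aux

/-- borrow as an integer. -/
def bor (a : ℕ → ℕ) (n i : ℕ) : ℤ := (borrow a n i : ℤ)

/-- the previous borrow, `bprev 0 = 0`. -/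
def bprev (a : ℕ → ℕ) (n : ℕ) : ℕ → ℤ
  | 0 => 0
  | i + 1 => bor a n i

/-- the digits of `D - rev D`, as integers. -/
def dig (a : ℕ → ℕ) (n i : ℕ) : ℤ :=
  (a i : ℤ) - (a (n - i) : ℤ) - bprev a n i + 10 * bor a n i

lemma bor_eq (a : ℕ → ℕ) (n i : ℕ) :
    bor a n i = if (a i : ℤ) - (a (n - i) : ℤ) - bprev a n i < 0 then 1 else 0 := by
  cases i with
  | zero =>
      simp only [bor, borrow, bprev, Nat.sub_zero, sub_zero, Nat.cast_ite, Nat.cast_one,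
        Nat.cast_zero]
  | succ i =>
      simp only [bor, borrow, bprev, Nat.cast_ite, Nat.cast_one, Nat.cast_zero]
      exact if_congr Iff.rfl rfl rfl

lemma bor_nonneg (a : ℕ → ℕ) (n i : ℕ) : 0 ≤ bor a n i := by
  rw [bor_eq]; split <;> norm_num

lemma bor_le_one (a : ℕ → ℕ) (n i : ℕ) : bor a n i ≤ 1 := by
  rw [bor_eq]; split <;> norm_num

lemma bprev_nonneg (a : ℕ → ℕ) (n i : ℕ) : 0 ≤ bprev a n i := by
  cases i with
  | zero => simp [bprev]
  | succ i => exact bor_nonneg a n i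

lemma bprev_le_one (a : ℕ → ℕ) (n i : ℕ) : bprev a n i ≤ 1 := by
  cases i with
  | zero => simp [bprev]
  | succ i => exact bor_le_one a n i

lemma dig_nonneg (a : ℕ → ℕ) (n : ℕ) (ha : ∀ i, i ≤ n → a i < 10) (i : ℕ) :
    0 ≤ dig a n i := by
  have h1 := bprev_le_one a n i
  have h2 : (a (n - i) : ℤ) < 10 := by exact_mod_cast Int.ofNat_lt.mpr (ha _ (Nat.sub_le n i))
  have h3 : (0:ℤ) ≤ a i := Int.ofNat_nonneg _
  unfold dig
  rw [bor_eq]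
  split <;> omega

lemma dig_lt (a : ℕ → ℕ) (n : ℕ) (ha : ∀ i, i ≤ n → a i < 10) (i : ℕ) (hi : i ≤ n) :
    dig a n i < 10 := by
  have h1 := bprev_nonneg a n i
  have h2 : (a i : ℤ) < 10 := by exact_mod_cast Int.ofNat_lt.mpr (ha _ hi)
  have h3 : (0:ℤ) ≤ a (n - i) := Int.ofNat_nonneg _
  unfold dig
  rw [bor_eq]
  split <;> omega

/-- Telescoping identity for the subtraction with borrows. -/
lemma sum_dig (a : ℕ → ℕ) (n : ℕ) :
    ∑ i ∈ Finset.range (n + 1), dig a n i * 10 ^ i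
      = ∑ i ∈ Finset.range (n + 1), ((a i : ℤ) - (a (n - i) : ℤ)) * 10 ^ i
        + bor a n n * 10 ^ (n + 1) := by
  have key : ∀ i, dig a n i * 10 ^ i
      = ((a i : ℤ) - (a (n - i) : ℤ)) * 10 ^ i
        + ((fun j => bprev a n j * 10 ^ j) (i + 1) - (fun j => bprev a n j * 10 ^ j) i) := by
    intro i
    simp only [dig, bprev]
    ring
  rw [Finset.sum_congr rfl fun i _ => key i, Finset.sum_add_distrib,
    Finset.sum_range_sub (fun j => bprev a n j * 10 ^ j) (n + 1)]
  simp [bprev]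

lemma ofDigits_map_range (f : ℕ → ℕ) (m : ℕ) :
    Nat.ofDigits 10 ((List.range m).map f) = ∑ i ∈ Finset.range m, f i * 10 ^ i := by
  induction m with
  | zero => simp [Nat.ofDigits]
  | succ m ih =>
      rw [List.range_succ, List.map_append, Nat.ofDigits_append, ih,
        Finset.sum_range_succ]
      simp [Nat.ofDigits_singleton, mul_comm]

lemma reverse_map_range (f : ℕ → ℕ) (m : ℕ) :
    ((List.range (m + 1)).map f).reverse = (List.range (m + 1)).map (fun i => f (m - i)) := by
  apply List.ext_getElem
  · simp
  · intro i h1 h2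
    simp only [List.length_reverse, List.length_map, List.length_range] at h1
    rw [List.getElem_reverse]
    simp only [List.getElem_map, List.getElem_range, List.length_map, List.length_range]
    congr 1

lemma digits_sum (f : ℕ → ℕ) (m : ℕ) (hf : ∀ i, i ≤ m → f i < 10) (hm : f m ≠ 0) :
    Nat.digits 10 (∑ i ∈ Finset.range (m + 1), f i * 10 ^ i)
      = (List.range (m + 1)).map f := by
  rw [← ofDigits_map_range]
  apply Nat.digits_ofDigits 10 (by norm_num)
  · intro l hl
    simp only [List.mem_map, List.mem_range] at hl
    obtain ⟨i, hi, rfl⟩ := hl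
    exact hf i (Nat.lt_succ_iff.mp hi)
  · intro h
    have : (List.range (m + 1)).map f = (List.range m).map f ++ [f m] := by
      rw [List.range_succ, List.map_append]; rfl
    rw [List.getLast_eq_getElem]
    simpa using hm

lemma sum_le_geom (f : ℕ → ℤ) (m : ℕ) (hf : ∀ i, i < m → f i ≤ 9) :
    ∑ i ∈ Finset.range m, f i * 10 ^ i ≤ 10 ^ m - 1 := by
  induction m with
  | zero => simp
  | succ m ih =>
      rw [Finset.sum_range_succ]
      have h1 : f m ≤ 9 := hf m (Nat.lt_succ_self m)
      have h2 : ∑ i ∈ Finset.range m, f i * 10 ^ i ≤ 10 ^ m - 1 :=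
        ih fun i hi => hf i (hi.trans (Nat.lt_succ_self m))
      have h3 : (0:ℤ) < 10 ^ m := by positivity
      rw [pow_succ]
      nlinarith

end Stmt2Aux

open Stmt2Aux

/-- If `D = Σ_{i=0}^n a_i 10^i` (with `a_n ≠ 0`, digits `< 10`),
`D > rev D`, and `E = D - rev D` has the same number `n+1` of decimal digits as `D`,
then `F = E + rev E = 99 · Σ_{i=0}^{n-1} b_{n-1-i} 10^i`:
the digit string of `F / 99` is the reverse of the borrow sequence `b_{n-1} … b_1 b_0`. -/
theorem stmt2 (D n : ℕ) (a : ℕ → ℕ)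
    (ha : ∀ i, i ≤ n → a i < 10) (han : a n ≠ 0)
    (hD : D = ∑ i ∈ Finset.range (n + 1), a i * 10 ^ i)
    (hlt : rev D < D)
    (hlen : (Nat.digits 10 (D - rev D)).length = n + 1) :
    (D - rev D) + rev (D - rev D) =
      99 * ∑ i ∈ Finset.range n, borrow a n (n - 1 - i) * 10 ^ i := by
  classical
  -- digits of D and formula for rev D
  have hdigD : Nat.digits 10 D = (List.range (n + 1)).map a := by
    rw [hD]; exact digits_sum a n ha han
  have hrevD : rev D = ∑ i ∈ Finset.range (n + 1), a (n - i) * 10 ^ i := by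
    rw [rev, hdigD, reverse_map_range, ofDigits_map_range]
  set E := D - rev D with hEdef
  have hle : rev D ≤ D := le_of_lt hlt
  have hEZ : (E : ℤ) = ∑ i ∈ Finset.range (n + 1), ((a i : ℤ) - (a (n - i) : ℤ)) * 10 ^ i := by
    rw [hEdef, Nat.cast_sub hle]
    have h1 : (D : ℤ) = ∑ i ∈ Finset.range (n + 1), (a i : ℤ) * 10 ^ i := by
      rw [hD]; push_cast; ring
    have h2 : ((rev D : ℕ) : ℤ) = ∑ i ∈ Finset.range (n + 1), (a (n - i) : ℤ) * 10 ^ i := by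
      rw [hrevD]; push_cast; ring
    rw [h1, h2, ← Finset.sum_sub_distrib]
    apply Finset.sum_congr rfl
    intro i _
    ring
  have hEpos : (0 : ℤ) < (E : ℤ) := by
    have : 0 < E := Nat.sub_pos_of_lt hlt
    exact_mod_cast this
  -- the final borrow is zero
  have hdub : ∑ i ∈ Finset.range (n + 1), dig a n i * 10 ^ i ≤ 10 ^ (n + 1) - 1 :=
    sum_le_geom _ _ (fun i hi => by
      have := dig_lt a n ha i (by omega); omega)
  have hsum := sum_dig a n
  have hBn : bor a n n = 0 := by
    have h01 : bor a n n = 0 ∨ bor a n n = 1 := by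
      have := bor_nonneg a n n; have := bor_le_one a n n; omega
    rcases h01 with h | h
    · exact h
    · exfalso
      rw [h, ← hEZ] at hsum
      have hp : (0:ℤ) < 10 ^ (n + 1) := by positivity
      linarith
  have hEdig : (E : ℤ) = ∑ i ∈ Finset.range (n + 1), dig a n i * 10 ^ i := by
    rw [hsum, hBn, hEZ]; ring
  -- the natural-number digits of E
  set en : ℕ → ℕ := fun i => (dig a n i).toNat with hen_def
  have hcast : ∀ i, (en i : ℤ) = dig a n i := fun i =>
    Int.toNat_of_nonneg (dig_nonneg a n ha i)
  have hEnat : E = ∑ i ∈ Finset.range (n + 1), en i * 10 ^ i := by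
    have : (E : ℤ) = ((∑ i ∈ Finset.range (n + 1), en i * 10 ^ i : ℕ) : ℤ) := by
      rw [hEdig]; push_cast [hcast]; ring
    exact_mod_cast this
  have hE0 : E ≠ 0 := by
    intro h; rw [h] at hEpos; simp at hEpos
  have h10n : 10 ^ n ≤ E := by
    have h := Nat.base_pow_length_digits_le 10 E (by norm_num) hE0
    rw [hlen, pow_succ, mul_comm (10 ^ n) 10] at h
    exact Nat.le_of_mul_le_mul_left h (by norm_num)
  have hen_n : en n ≠ 0 := by
    intro h
    have hdn : dig a n n = 0 := by rw [← hcast n, h]; simp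
    have hub : (E : ℤ) ≤ 10 ^ n - 1 := by
      rw [hEdig, Finset.sum_range_succ, hdn]
      have := sum_le_geom (dig a n) n (fun i hi => by
        have := dig_lt a n ha i (by omega); omega)
      linarith
    have hlb : (10 : ℤ) ^ n ≤ (E : ℤ) := by exact_mod_cast h10n
    linarith
  have hen_lt : ∀ i, i ≤ n → en i < 10 := by
    intro i hi
    have h1 := dig_lt a n ha i hi
    rw [← hcast i] at h1
    exact_mod_cast h1
  have hdigE : Nat.digits 10 E = (List.range (n + 1)).map en := by
    rw [hEnat]; exact digits_sum en n hen_lt hen_n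
  have hrevE : rev E = ∑ i ∈ Finset.range (n + 1), en (n - i) * 10 ^ i := by
    rw [rev, hdigE, reverse_map_range, ofDigits_map_range]
  -- now the main computation, over ℤ
  have key : ((E + rev E : ℕ) : ℤ)
      = ((99 * ∑ i ∈ Finset.range n, borrow a n (n - 1 - i) * 10 ^ i : ℕ) : ℤ) := by
    have hL : ((E + rev E : ℕ) : ℤ)
        = ∑ i ∈ Finset.range (n + 1), (dig a n i + dig a n (n - i)) * 10 ^ i := by
      push_cast [hrevE, hEdig, hcast]
      rw [← Finset.sum_add_distrib]
      apply Finset.sum_congr rfl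
      intro i _
      ring
    rw [hL]
    -- split the summand
    have hsplit : ∑ i ∈ Finset.range (n + 1), (dig a n i + dig a n (n - i)) * 10 ^ i
        = ∑ i ∈ Finset.range (n + 1), (10 * bor a n i - bprev a n i) * 10 ^ i
          + ∑ i ∈ Finset.range (n + 1), (10 * bor a n (n - i) - bprev a n (n - i)) * 10 ^ i := by
      rw [← Finset.sum_add_distrib]
      apply Finset.sum_congr rfl
      intro i hi
      rw [Finset.mem_range] at hi
      have hii : n - (n - i) = i := by omega
      simp only [dig, hii]
      ring
    -- first sum telescopes to zero
    have hfirst : ∑ i ∈ Finset.range (n + 1), (10 * bor a n i - bprev a n i) * 10 ^ i = 0 := by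
      have hkey : ∀ i, (10 * bor a n i - bprev a n i) * 10 ^ i
          = (fun j => bprev a n j * 10 ^ j) (i + 1) - (fun j => bprev a n j * 10 ^ j) i := by
        intro i
        simp only [bprev]
        ring
      rw [Finset.sum_congr rfl fun i _ => hkey i,
        Finset.sum_range_sub (fun j => bprev a n j * 10 ^ j) (n + 1)]
      simp [bprev, hBn]
    -- second sum: reflect and telescope
    have hsecond : ∑ i ∈ Finset.range (n + 1), (10 * bor a n (n - i) - bprev a n (n - i)) * 10 ^ i
        = ∑ j ∈ Finset.range n, 99 * bor a n j * 10 ^ (n - 1 - j) := by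
      have hrefl : ∑ i ∈ Finset.range (n + 1), (10 * bor a n (n - i) - bprev a n (n - i)) * 10 ^ i
          = ∑ j ∈ Finset.range (n + 1), (10 * bor a n j - bprev a n j) * 10 ^ (n - j) := by
        rw [← Finset.sum_range_reflect (fun j => (10 * bor a n j - bprev a n j) * 10 ^ (n - j)) (n + 1)]
        apply Finset.sum_congr rfl
        intro i hi
        rw [Finset.mem_range] at hi
        have h1 : n + 1 - 1 - i = n - i := by omega
        have h2 : n - (n - i) = i := by omega
        rw [h1, h2]
      rw [hrefl]
      have hsub : ∑ j ∈ Finset.range (n + 1), (10 * bor a n j - bprev a n j) * 10 ^ (n - j)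
          = ∑ j ∈ Finset.range (n + 1), 10 * bor a n j * 10 ^ (n - j)
            - ∑ j ∈ Finset.range (n + 1), bprev a n j * 10 ^ (n - j) := by
        rw [← Finset.sum_sub_distrib]
        apply Finset.sum_congr rfl
        intro j _
        ring
      rw [hsub]
      have hA : ∑ j ∈ Finset.range (n + 1), 10 * bor a n j * 10 ^ (n - j)
          = ∑ j ∈ Finset.range n, 10 * bor a n j * 10 ^ (n - j) := by
        rw [Finset.sum_range_succ, hBn]
        simp
      have hB : ∑ j ∈ Finset.range (n + 1), bprev a n j * 10 ^ (n - j)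
          = ∑ j ∈ Finset.range n, bor a n j * 10 ^ (n - 1 - j) := by
        rw [Finset.sum_range_succ' (fun j => bprev a n j * 10 ^ (n - j)) n]
        simp only [bprev]
        have : ∀ j ∈ Finset.range n, bor a n j * 10 ^ (n - (j + 1))
            = bor a n j * 10 ^ (n - 1 - j) := by
          intro j hj
          congr 2
          omega
        rw [Finset.sum_congr rfl this]
        simp
      rw [hA, hB, ← Finset.sum_sub_distrib]
      apply Finset.sum_congr rfl
      intro j hj
      rw [Finset.mem_range] at hj
      have h1 : n - j = (n - 1 - j) + 1 := by omega
      rw [h1, pow_succ]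
      ring
    rw [hsplit, hfirst, hsecond]
    -- reflect back to the stated form
    push_cast
    rw [Finset.mul_sum]
    rw [← Finset.sum_range_reflect
      (fun i => 99 * ((borrow a n (n - 1 - i) : ℤ) * 10 ^ i)) n]
    rw [zero_add]
    apply Finset.sum_congr rfl
    intro j hj
    rw [Finset.mem_range] at hj
    have h1 : n - 1 - (n - 1 - j) = j := by omega
    rw [h1]
    simp only [bor]
    ring
  exact_mod_cast key
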